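/- arXiv:math/0302070 — 2 statements merged into one kernel-verified Lean document; each statement's English description precedes it below -/
import Mathlib

section
/- Let (b,ψ) be a smooth solution of the vortex equations on ℝ² for parameter ε > 0. Then for every w = (w₁,w₂) ∈ ℝ², the pair (c,f) given by c = (−w₂F₁₂, w₁F₁₂) and f = w₁D₁ψ + w₂D₂ψ solves the linearized vortex system (L1)–(L3) at (b,ψ). -/
noncomputable section

open Complex MeasureTheory Filter

/-- First partial derivative on `ℝ²`. -/
def pd1 {V : Type*} [NormedAddCommGroup V] [NormedSpace ℝ V] (f : ℝ × ℝ → V) (y : ℝ × ℝ) : V :=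
  fderiv ℝ f y (1, 0)

/-- Second partial derivative on `ℝ²`. -/
def pd2 {V : Type*} [NormedAddCommGroup V] [NormedSpace ℝ V] (f : ℝ × ℝ → V) (y : ℝ × ℝ) : V :=
  fderiv ℝ f y (0, 1)

/-- First covariant derivative `D₁u = ∂₁u + i b₁ u`. -/
def D1 (b1 : ℝ × ℝ → ℝ) (ψ : ℝ × ℝ → ℂ) (y : ℝ × ℝ) : ℂ := pd1 ψ y + I * b1 y * ψ y

/-- Second covariant derivative `D₂u = ∂₂u + i b₂ u`. -/
def D2 (b2 : ℝ × ℝ → ℝ) (ψ : ℝ × ℝ → ℂ) (y : ℝ × ℝ) : ℂ := pd2 ψ y + I * b2 y * ψ y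

/-- Curvature `F₁₂ = ∂₁b₂ − ∂₂b₁`. -/
def F12 (b1 b2 : ℝ × ℝ → ℝ) (y : ℝ × ℝ) : ℝ := pd1 b2 y - pd2 b1 y

/- ### Auxiliary lemmas -/

lemma contDiff_pdv {V : Type*} [NormedAddCommGroup V] [NormedSpace ℝ V]
    {f : ℝ × ℝ → V} (hf : ContDiff ℝ (⊤ : ℕ∞) f) (v : ℝ × ℝ) :
    ContDiff ℝ (⊤ : ℕ∞) (fun z => fderiv ℝ f z v) :=
  (hf.fderiv_right (by norm_cast)).clm_apply contDiff_const

lemma fd_add {V : Type*} [NormedAddCommGroup V] [NormedSpace ℝ V]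
    {f g : ℝ × ℝ → V} {y v : ℝ × ℝ} (hf : DifferentiableAt ℝ f y) (hg : DifferentiableAt ℝ g y) :
    fderiv ℝ (fun z => f z + g z) y v = fderiv ℝ f y v + fderiv ℝ g y v := by
  rw [fderiv_fun_add hf hg]; simp

lemma fd_sub {V : Type*} [NormedAddCommGroup V] [NormedSpace ℝ V]
    {f g : ℝ × ℝ → V} {y v : ℝ × ℝ} (hf : DifferentiableAt ℝ f y) (hg : DifferentiableAt ℝ g y) :
    fderiv ℝ (fun z => f z - g z) y v = fderiv ℝ f y v - fderiv ℝ g y v := by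
  rw [fderiv_fun_sub hf hg]; simp

lemma fd_cmul {f : ℝ × ℝ → ℂ} {y v : ℝ × ℝ} (hf : DifferentiableAt ℝ f y) (a : ℂ) :
    fderiv ℝ (fun z => a * f z) y v = a * fderiv ℝ f y v := by
  rw [fderiv_const_mul hf a]; simp

lemma fd_rmul {f : ℝ × ℝ → ℝ} {y v : ℝ × ℝ} (hf : DifferentiableAt ℝ f y) (a : ℝ) :
    fderiv ℝ (fun z => a * f z) y v = a * fderiv ℝ f y v := by
  rw [fderiv_const_mul hf a]; simp

lemma fd_mul {f g : ℝ × ℝ → ℂ} {y v : ℝ × ℝ} (hf : DifferentiableAt ℝ f y)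
    (hg : DifferentiableAt ℝ g y) :
    fderiv ℝ (fun z => f z * g z) y v = f y * fderiv ℝ g y v + g y * fderiv ℝ f y v := by
  rw [fderiv_fun_mul hf hg]; simp

lemma fd_mulR {f g : ℝ × ℝ → ℝ} {y v : ℝ × ℝ} (hf : DifferentiableAt ℝ f y)
    (hg : DifferentiableAt ℝ g y) :
    fderiv ℝ (fun z => f z * g z) y v = f y * fderiv ℝ g y v + g y * fderiv ℝ f y v := by
  rw [fderiv_fun_mul hf hg]; simp

lemma fd_ofReal {f : ℝ × ℝ → ℝ} {y v : ℝ × ℝ} (hf : DifferentiableAt ℝ f y) :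
    fderiv ℝ (fun z => ((f z : ℝ) : ℂ)) y v = (fderiv ℝ f y v : ℂ) := by
  have h := (Complex.ofRealCLM.hasFDerivAt.comp y hf.hasFDerivAt).fderiv
  have h2 : (fun z => ((f z : ℝ) : ℂ)) = Complex.ofRealCLM ∘ f := rfl
  rw [h2, h]; simp

lemma fd_re {f : ℝ × ℝ → ℂ} {y v : ℝ × ℝ} (hf : DifferentiableAt ℝ f y) :
    fderiv ℝ (fun z => (f z).re) y v = (fderiv ℝ f y v).re := by
  have h := (Complex.reCLM.hasFDerivAt.comp y hf.hasFDerivAt).fderiv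
  have h2 : (fun z => (f z).re) = Complex.reCLM ∘ f := rfl
  rw [h2, h]; simp

lemma fd_im {f : ℝ × ℝ → ℂ} {y v : ℝ × ℝ} (hf : DifferentiableAt ℝ f y) :
    fderiv ℝ (fun z => (f z).im) y v = (fderiv ℝ f y v).im := by
  have h := (Complex.imCLM.hasFDerivAt.comp y hf.hasFDerivAt).fderiv
  have h2 : (fun z => (f z).im) = Complex.imCLM ∘ f := rfl
  rw [h2, h]; simp

lemma pd_comm {V : Type*} [NormedAddCommGroup V] [NormedSpace ℝ V] {f : ℝ × ℝ → V}
    (hf : ContDiff ℝ (⊤ : ℕ∞) f) (y v w : ℝ × ℝ) :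
    fderiv ℝ (fun z => fderiv ℝ f z w) y v = fderiv ℝ (fun z => fderiv ℝ f z v) y w := by
  have hsymm : IsSymmSndFDerivAt ℝ f y :=
    hf.contDiffAt.isSymmSndFDerivAt (by rw [minSmoothness_of_isRCLikeNormedField]; exact WithTop.coe_le_coe.mpr (le_top : (2:ℕ∞) ≤ ⊤))
  have hd : DifferentiableAt ℝ (fderiv ℝ f) y :=
    ((hf.fderiv_right (m := (⊤:ℕ∞)) (by norm_cast)).differentiable (by norm_cast)) y
  have e : ∀ u : ℝ × ℝ, fderiv ℝ (fun z => fderiv ℝ f z u) y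
      = (fderiv ℝ (fderiv ℝ f) y).flip u := by
    intro u
    rw [fderiv_clm_apply hd (differentiableAt_const u)]
    simp
  rw [e w, e v]
  simpa using hsymm v w

/-- `(c,f) = ((−w₂F₁₂, w₁F₁₂), w₁D₁ψ + w₂D₂ψ)` solves the linearized vortex
system (L1)–(L3) at a solution `(b,ψ)` of the vortex equations. -/
theorem translation_solves_linearized (ε : ℝ) (hε : 0 < ε)
    (b1 b2 : ℝ × ℝ → ℝ) (ψ : ℝ × ℝ → ℂ)
    (hb1 : ContDiff ℝ (⊤ : ℕ∞) b1) (hb2 : ContDiff ℝ (⊤ : ℕ∞) b2)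
    (hψ : ContDiff ℝ (⊤ : ℕ∞) ψ)
    (hv1 : ∀ y, ε * F12 b1 b2 y = (1 - ‖ψ y‖ ^ 2) / (2 * ε))
    (hv2 : ∀ y, D1 b1 ψ y - I * D2 b2 ψ y = 0) (w1 w2 : ℝ) (y : ℝ × ℝ) :
    ε * (pd1 (fun z => w1 * F12 b1 b2 z) y - pd2 (fun z => -(w2 * F12 b1 b2 z)) y)
        + ε⁻¹ * ((starRingEnd ℂ) (ψ y) *
            ((w1 : ℂ) * D1 b1 ψ y + (w2 : ℂ) * D2 b2 ψ y)).re = 0 ∧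
    ε * (pd1 (fun z => -(w2 * F12 b1 b2 z)) y + pd2 (fun z => w1 * F12 b1 b2 z) y)
        + ε⁻¹ * ((starRingEnd ℂ) (ψ y) *
            ((w1 : ℂ) * D1 b1 ψ y + (w2 : ℂ) * D2 b2 ψ y)).im = 0 ∧
    (D1 b1 (fun z => (w1 : ℂ) * D1 b1 ψ z + (w2 : ℂ) * D2 b2 ψ z) y
        - I * D2 b2 (fun z => (w1 : ℂ) * D1 b1 ψ z + (w2 : ℂ) * D2 b2 ψ z) y)
      + I * ((-(w2 * F12 b1 b2 y) : ℝ) - I * ((w1 * F12 b1 b2 y : ℝ) : ℂ)) * ψ y = 0 := by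
  have hεne : ε ≠ 0 := ne_of_gt hε
  have hψd : Differentiable ℝ ψ := hψ.differentiable (by norm_cast)
  have hb1d : Differentiable ℝ b1 := hb1.differentiable (by norm_cast)
  have hb2d : Differentiable ℝ b2 := hb2.differentiable (by norm_cast)
  have hb1c : ContDiff ℝ (⊤ : ℕ∞) (fun z => ((b1 z : ℝ) : ℂ)) :=
    Complex.ofRealCLM.contDiff.comp hb1
  have hb2c : ContDiff ℝ (⊤ : ℕ∞) (fun z => ((b2 z : ℝ) : ℂ)) :=
    Complex.ofRealCLM.contDiff.comp hb2
  have hD1 : ContDiff ℝ (⊤ : ℕ∞) (fun z => D1 b1 ψ z) := by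
    unfold D1 pd1
    exact (contDiff_pdv hψ (1, 0)).add ((contDiff_const.mul hb1c).mul hψ)
  have hD2 : ContDiff ℝ (⊤ : ℕ∞) (fun z => D2 b2 ψ z) := by
    unfold D2 pd2
    exact (contDiff_pdv hψ (0, 1)).add ((contDiff_const.mul hb2c).mul hψ)
  have hD1d : Differentiable ℝ (fun z => D1 b1 ψ z) := hD1.differentiable (by norm_cast)
  have hD2d : Differentiable ℝ (fun z => D2 b2 ψ z) := hD2.differentiable (by norm_cast)
  have hFc : ContDiff ℝ (⊤ : ℕ∞) (F12 b1 b2) := by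
    unfold F12 pd1 pd2
    exact (contDiff_pdv hb2 (1, 0)).sub (contDiff_pdv hb1 (0, 1))
  have hFd : Differentiable ℝ (F12 b1 b2) := hFc.differentiable (by norm_cast)
  have hred : Differentiable ℝ (fun z => (ψ z).re) :=
    (Complex.reCLM.contDiff.comp hψ).differentiable (by norm_cast)
  have himd : Differentiable ℝ (fun z => (ψ z).im) :=
    (Complex.imCLM.contDiff.comp hψ).differentiable (by norm_cast)
  -- derivative of the first vortex equation
  have hA : ∀ v : ℝ × ℝ, ε * fderiv ℝ (F12 b1 b2) y v
      = -(ε⁻¹ * ((ψ y).re * (fderiv ℝ ψ y v).re + (ψ y).im * (fderiv ℝ ψ y v).im)) := by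
    intro v
    have hSd : DifferentiableAt ℝ (fun z => (ψ z).re * (ψ z).re + (ψ z).im * (ψ z).im) y :=
      ((hred y).mul (hred y)).add ((himd y).mul (himd y))
    have hfuneq : (fun z => ε * F12 b1 b2 z)
        = (fun z => (2 * ε)⁻¹ * (1 - ((ψ z).re * (ψ z).re + (ψ z).im * (ψ z).im))) := by
      funext z
      rw [hv1 z, div_eq_mul_inv, mul_comm]
      congr 2
      rw [Complex.sq_norm, Complex.normSq_apply]
    have h2 : ε * fderiv ℝ (F12 b1 b2) y v
        = fderiv ℝ (fun z =>
            (2 * ε)⁻¹ * (1 - ((ψ z).re * (ψ z).re + (ψ z).im * (ψ z).im))) y v := by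
      rw [← fd_rmul (hFd y) ε, hfuneq]
    rw [h2, fd_rmul ((differentiableAt_const (1:ℝ)).fun_sub hSd) ((2 * ε)⁻¹),
      fd_sub (differentiableAt_const (1:ℝ)) hSd,
      fd_add ((hred y).fun_mul (hred y)) ((himd y).fun_mul (himd y)),
      fd_mulR (hred y) (hred y), fd_mulR (himd y) (himd y),
      fd_re (hψd y), fd_im (hψd y)]
    simp only [fderiv_const_apply, Pi.zero_apply, ContinuousLinearMap.zero_apply]
    field_simp
    ring
  have hA1 := hA (1, 0)
  have hA2 := hA (0, 1)
  -- components of the second vortex equation at y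
  have hv2y := hv2 y
  refine ⟨?_, ?_, ?_⟩
  · -- (L1)
    have e1 : pd1 (fun z => w1 * F12 b1 b2 z) y = w1 * fderiv ℝ (F12 b1 b2) y (1, 0) :=
      fd_rmul (hFd y) w1
    have e2 : pd2 (fun z => -(w2 * F12 b1 b2 z)) y
        = -(w2 * fderiv ℝ (F12 b1 b2) y (0, 1)) := by
      show fderiv ℝ (fun z => -(w2 * F12 b1 b2 z)) y (0, 1) = _
      rw [fderiv_fun_neg]
      simp only [ContinuousLinearMap.neg_apply]
      rw [fd_rmul (hFd y) w2]
    rw [e1, e2]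
    unfold D1 D2 pd1 pd2
    simp only [Complex.mul_re, Complex.mul_im, Complex.add_re, Complex.add_im,
      Complex.conj_re, Complex.conj_im, Complex.I_re, Complex.I_im,
      Complex.ofReal_re, Complex.ofReal_im]
    linear_combination w1 * hA1 + w2 * hA2
  · -- (L2)
    have e1 : pd2 (fun z => w1 * F12 b1 b2 z) y = w1 * fderiv ℝ (F12 b1 b2) y (0, 1) :=
      fd_rmul (hFd y) w1
    have e2 : pd1 (fun z => -(w2 * F12 b1 b2 z)) y
        = -(w2 * fderiv ℝ (F12 b1 b2) y (1, 0)) := by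
      show fderiv ℝ (fun z => -(w2 * F12 b1 b2 z)) y (1, 0) = _
      rw [fderiv_fun_neg]
      simp only [ContinuousLinearMap.neg_apply]
      rw [fd_rmul (hFd y) w2]
    have hre2 := congrArg Complex.re hv2y
    have him2 := congrArg Complex.im hv2y
    unfold D1 D2 pd1 pd2 at hre2 him2
    simp only [Complex.sub_re, Complex.sub_im, Complex.add_re, Complex.add_im,
      Complex.mul_re, Complex.mul_im, Complex.I_re, Complex.I_im,
      Complex.ofReal_re, Complex.ofReal_im, Complex.zero_re, Complex.zero_im] at hre2 him2
    rw [e1, e2]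
    unfold D1 D2 pd1 pd2
    simp only [Complex.mul_re, Complex.mul_im, Complex.add_re, Complex.add_im,
      Complex.conj_re, Complex.conj_im, Complex.I_re, Complex.I_im,
      Complex.ofReal_re, Complex.ofReal_im]
    linear_combination (-w2) * hA1 + w1 * hA2
      + ε⁻¹ * (w2 * (ψ y).re - w1 * (ψ y).im) * hre2
      + ε⁻¹ * (w1 * (ψ y).re + w2 * (ψ y).im) * him2
  · -- (L3)
    have hv2f : (fun z => D1 b1 ψ z) = (fun z => I * D2 b2 ψ z) := by
      funext z; exact sub_eq_zero.mp (hv2 z)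
    have hRa1 : fderiv ℝ (fun z => D1 b1 ψ z) y (1, 0)
        = I * fderiv ℝ (fun z => D2 b2 ψ z) y (1, 0) := by
      rw [hv2f]; exact fd_cmul (hD2d y) I
    have hRa2 : fderiv ℝ (fun z => D1 b1 ψ z) y (0, 1)
        = I * fderiv ℝ (fun z => D2 b2 ψ z) y (0, 1) := by
      rw [hv2f]; exact fd_cmul (hD2d y) I
    have hex : ∀ (b : ℝ × ℝ → ℝ), Differentiable ℝ b →
        ∀ (w v : ℝ × ℝ),
        fderiv ℝ (fun z => fderiv ℝ ψ z w + I * (b z : ℂ) * ψ z) y v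
          = fderiv ℝ (fun z => fderiv ℝ ψ z w) y v
            + I * ((b y : ℂ) * fderiv ℝ ψ y v + ψ y * (fderiv ℝ b y v : ℂ)) := by
      intro b hb w v
      have hbc : Differentiable ℝ (fun z => ((b z : ℝ) : ℂ)) := fun x =>
        Complex.ofRealCLM.differentiableAt.comp x (hb x)
      have h1 : (fun z => fderiv ℝ ψ z w + I * (b z : ℂ) * ψ z)
          = (fun z => fderiv ℝ ψ z w + I * ((b z : ℂ) * ψ z)) := by
        funext z; ring
      rw [h1, fd_add ((contDiff_pdv hψ w).differentiable (by norm_cast) y)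
          (((hbc y).fun_mul (hψd y)).const_mul I),
        fd_cmul ((hbc y).fun_mul (hψd y)) I, fd_mul (hbc y) (hψd y), fd_ofReal (hb y)]
    have hQ2 : ∀ v : ℝ × ℝ, fderiv ℝ (fun z => D2 b2 ψ z) y v
        = fderiv ℝ (fun z => fderiv ℝ ψ z (0, 1)) y v
          + I * ((b2 y : ℂ) * fderiv ℝ ψ y v + ψ y * (fderiv ℝ b2 y v : ℂ)) := by
      intro v
      have : (fun z => D2 b2 ψ z) = (fun z => fderiv ℝ ψ z (0, 1) + I * (b2 z : ℂ) * ψ z) := rfl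
      rw [this]
      exact hex b2 hb2d (0, 1) v
    have hQ1 : ∀ v : ℝ × ℝ, fderiv ℝ (fun z => D1 b1 ψ z) y v
        = fderiv ℝ (fun z => fderiv ℝ ψ z (1, 0)) y v
          + I * ((b1 y : ℂ) * fderiv ℝ ψ y v + ψ y * (fderiv ℝ b1 y v : ℂ)) := by
      intro v
      have : (fun z => D1 b1 ψ z) = (fun z => fderiv ℝ ψ z (1, 0) + I * (b1 z : ℂ) * ψ z) := rfl
      rw [this]
      exact hex b1 hb1d (1, 0) v
    have hQ2a := hQ2 (1, 0)
    have hQ1a := hQ1 (0, 1)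
    have hsymψ : fderiv ℝ (fun z => fderiv ℝ ψ z (0, 1)) y (1, 0)
        = fderiv ℝ (fun z => fderiv ℝ ψ z (1, 0)) y (0, 1) := pd_comm hψ y (1, 0) (0, 1)
    have hs1 : pd1 (fun z => (w1 : ℂ) * D1 b1 ψ z + (w2 : ℂ) * D2 b2 ψ z) y
        = (w1 : ℂ) * fderiv ℝ (fun z => D1 b1 ψ z) y (1, 0)
          + (w2 : ℂ) * fderiv ℝ (fun z => D2 b2 ψ z) y (1, 0) := by
      show fderiv ℝ (fun z => (w1 : ℂ) * D1 b1 ψ z + (w2 : ℂ) * D2 b2 ψ z) y (1, 0) = _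
      rw [fd_add ((hD1d y).const_mul _) ((hD2d y).const_mul _),
        fd_cmul (hD1d y) _, fd_cmul (hD2d y) _]
    have hs2 : pd2 (fun z => (w1 : ℂ) * D1 b1 ψ z + (w2 : ℂ) * D2 b2 ψ z) y
        = (w1 : ℂ) * fderiv ℝ (fun z => D1 b1 ψ z) y (0, 1)
          + (w2 : ℂ) * fderiv ℝ (fun z => D2 b2 ψ z) y (0, 1) := by
      show fderiv ℝ (fun z => (w1 : ℂ) * D1 b1 ψ z + (w2 : ℂ) * D2 b2 ψ z) y (0, 1) = _
      rw [fd_add ((hD1d y).const_mul _) ((hD2d y).const_mul _),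
        fd_cmul (hD1d y) _, fd_cmul (hD2d y) _]
    simp only [D1, D2, pd1, pd2, F12] at hRa1 hRa2 hQ2a hQ1a hs1 hs2 hv2y ⊢
    rw [hs1, hs2]
    push_cast
    linear_combination (w1 : ℂ) * hRa1 + (w2 : ℂ) * hRa2
      + (I * (w1 : ℂ) + (w2 : ℂ)) * hQ2a - (I * (w1 : ℂ) + (w2 : ℂ)) * hQ1a
      + (I * (w1 : ℂ) + (w2 : ℂ)) * hsymψ
      + ((w1 : ℂ) * (I * ((b1 y : ℝ) : ℂ) + ((b2 y : ℝ) : ℂ))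
          + (I * (w1 : ℂ) + (w2 : ℂ)) * I * ((b2 y : ℝ) : ℂ)) * hv2y
      + ((w1 : ℂ) * ((b2 y : ℝ) : ℂ) * (-(fderiv ℝ ψ y (1, 0)) + I ^ 2 * ψ y * ((b2 y : ℝ) : ℂ)
          - I * ((b1 y : ℝ) : ℂ) * ψ y + I * fderiv ℝ ψ y (0, 1))) * Complex.I_sq
end
end

section
/- Let n ≥ 1, let c > 0 and 0 ≤ λ < c, and let u : ℝⁿ → ℝ be a smooth function satisfying Δu(x) = c²·u(x) for all x ∈ ℝⁿ and |u(x)| ≤ M·e^{λ|x|} for some constant M and all x ∈ ℝⁿ. Then u is identically zero. -/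
noncomputable section

open MeasureTheory Filter

/-- Partial derivative on `ℝⁿ` in the `j`-th coordinate direction. -/
def pdE {n : ℕ} (j : Fin n) (f : EuclideanSpace ℝ (Fin n) → ℝ)
    (x : EuclideanSpace ℝ (Fin n)) : ℝ :=
  fderiv ℝ f x (EuclideanSpace.single j 1)

/-- The Euclidean Laplacian `Δu = Σ_j ∂²u/∂x_j²`. -/
def lapE {n : ℕ} (f : EuclideanSpace ℝ (Fin n) → ℝ) (x : EuclideanSpace ℝ (Fin n)) : ℝ :=
  ∑ j : Fin n, pdE j (fun z => pdE j f z) x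

open Topology RealInnerProductSpace
set_option maxHeartbeats 1000000

namespace LiouvilleAux

variable {n : ℕ}

/-- Second derivative test at a global maximum. -/
lemma sd_test (g g' : ℝ → ℝ) (d : ℝ)
    (hg : ∀ t, HasDerivAt g (g' t) t) (hg' : HasDerivAt g' d 0)
    (hmax : ∀ t, g t ≤ g 0) : d ≤ 0 := by
  by_contra hd
  push_neg at hd
  have hloc : IsLocalMax g 0 := Filter.Eventually.of_forall hmax
  have h0 : g' 0 = 0 := by
    have := hloc.deriv_eq_zero
    rwa [(hg 0).deriv] at this
  have hslope : Tendsto (slope g' 0) (𝓝[≠] 0) (𝓝 d) :=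
    hasDerivAt_iff_tendsto_slope.mp hg'
  have hslope' : Tendsto (slope g' 0) (𝓝[>] 0) (𝓝 d) :=
    hslope.mono_left (nhdsWithin_mono 0 (fun t ht => ne_of_gt ht))
  have hev : ∀ᶠ t in 𝓝[>] (0:ℝ), 0 < slope g' 0 t :=
    hslope'.eventually (eventually_gt_nhds hd)
  have hev2 : ∀ᶠ t in 𝓝[>] (0:ℝ), 0 < g' t := by
    filter_upwards [hev, self_mem_nhdsWithin] with t hst (ht : 0 < t)
    have : slope g' 0 t = g' t / t := by
      simp [slope, h0, div_eq_inv_mul]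
    rw [this] at hst
    have := mul_pos hst ht
    rwa [div_mul_cancel₀ _ (ne_of_gt ht)] at this
  obtain ⟨a, ha, hIoo⟩ := mem_nhdsGT_iff_exists_Ioo_subset.mp hev2
  have ha0 : (0:ℝ) < a := ha
  have hmono : StrictMonoOn g (Set.Icc 0 a) := by
    apply strictMonoOn_of_deriv_pos (convex_Icc 0 a)
    · exact (fun t _ => (hg t).continuousAt.continuousWithinAt)
    · intro t ht
      rw [interior_Icc] at ht
      rw [(hg t).deriv]
      exact hIoo ht
  have : g 0 < g a := hmono (Set.left_mem_Icc.mpr ha0.le) (Set.right_mem_Icc.mpr ha0.le) ha0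
  exact absurd (hmax a) (not_le.mpr this)

lemma contDiff_pdE (j : Fin n) {f : EuclideanSpace ℝ (Fin n) → ℝ}
    (hf : ContDiff ℝ (⊤ : ℕ∞) f) : ContDiff ℝ (⊤ : ℕ∞) (pdE j f) := by
  have h1 : ContDiff ℝ (⊤ : ℕ∞) (fderiv ℝ f) := hf.fderiv_right (by exact_mod_cast le_top)
  exact h1.clm_apply contDiff_const

lemma hasDerivAt_line (v x₀ : EuclideanSpace ℝ (Fin n)) (t : ℝ) :
    HasDerivAt (fun t : ℝ => x₀ + t • v) v t := by
  simpa using ((hasDerivAt_id t).smul_const v).const_add x₀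

lemma hasDerivAt_comp_line {f : EuclideanSpace ℝ (Fin n) → ℝ}
    (hf : ContDiff ℝ (⊤ : ℕ∞) f) (v x₀ : EuclideanSpace ℝ (Fin n)) (t : ℝ) :
    HasDerivAt (fun s : ℝ => f (x₀ + s • v)) (fderiv ℝ f (x₀ + t • v) v) t :=
  ((hf.differentiable (by simp)).differentiableAt.hasFDerivAt).comp_hasDerivAt t
    (hasDerivAt_line v x₀ t)

/-- At a global max of a smooth function, the Laplacian is nonpositive. -/
lemma lapE_nonpos_at_max {f : EuclideanSpace ℝ (Fin n) → ℝ}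
    (hf : ContDiff ℝ (⊤ : ℕ∞) f) (x₀ : EuclideanSpace ℝ (Fin n))
    (hmax : ∀ x, f x ≤ f x₀) : lapE f x₀ ≤ 0 := by
  apply Finset.sum_nonpos
  intro j _
  set v := EuclideanSpace.single j (1:ℝ)
  apply sd_test (fun s : ℝ => f (x₀ + s • v)) (fun s : ℝ => pdE j f (x₀ + s • v))
  · intro t; exact hasDerivAt_comp_line hf v x₀ t
  · have h := hasDerivAt_comp_line (contDiff_pdE j hf) v x₀ 0
    rw [zero_smul, add_zero] at h
    exact h
  · intro t; simpa using hmax (x₀ + t • v)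

/-- Derivative of `x ↦ φ(c⟪e,x⟫)`. -/
lemma hasFDerivAt_phiInner (c : ℝ) (e x : EuclideanSpace ℝ (Fin n))
    (φ φ' : ℝ → ℝ) (hφ : ∀ s, HasDerivAt φ (φ' s) s) :
    HasFDerivAt (fun y => φ (c * ⟪e, y⟫)) ((φ' (c * ⟪e, x⟫) * (c * 1)) • (innerSL ℝ e)) x := by
  have h1 : HasDerivAt (fun s : ℝ => φ (c * s)) (φ' (c * ⟪e, x⟫) * (c * 1)) (⟪e, x⟫) :=
    (hφ _).comp _ ((hasDerivAt_id _).const_mul c)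
  exact h1.comp_hasFDerivAt x (innerSL ℝ e).hasFDerivAt

lemma pdE_phiInner (c : ℝ) (j : Fin n) (e x : EuclideanSpace ℝ (Fin n))
    (φ φ' : ℝ → ℝ) (hφ : ∀ s, HasDerivAt φ (φ' s) s) :
    pdE j (fun y => φ (c * ⟪e, y⟫)) x = c * φ' (c * ⟪e, x⟫) * e j := by
  rw [pdE, (hasFDerivAt_phiInner c e x φ φ' hφ).fderiv]
  simp [EuclideanSpace.inner_single_right]
  exact Or.inl (mul_comm _ _)

lemma pdE_mul_const (j : Fin n) {g : EuclideanSpace ℝ (Fin n) → ℝ}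
    {x : EuclideanSpace ℝ (Fin n)} (hg : DifferentiableAt ℝ g x) (a : ℝ) :
    pdE j (fun y => g y * a) x = pdE j g x * a := by
  unfold pdE
  rw [fderiv_mul_const hg]
  simp [mul_comm]

/-- Laplacian of the elementary barrier `cosh(c⟪e,·⟫)` for a unit vector `e`. -/
lemma lapE_bar (c : ℝ) (e : EuclideanSpace ℝ (Fin n)) (he : ‖e‖ = 1)
    (x : EuclideanSpace ℝ (Fin n)) :
    ∑ j : Fin n, pdE j (fun z => pdE j (fun y => Real.cosh (c * ⟪e, y⟫)) z) x
      = c ^ 2 * Real.cosh (c * ⟪e, x⟫) := by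
  have key : ∀ j : Fin n,
      pdE j (fun z => pdE j (fun y => Real.cosh (c * ⟪e, y⟫)) z) x
        = (c ^ 2 * Real.cosh (c * ⟪e, x⟫)) * (e j * e j) := by
    intro j
    have h1 : (fun z => pdE j (fun y => Real.cosh (c * ⟪e, y⟫)) z)
        = fun z => (c * Real.sinh (c * ⟪e, z⟫)) * e j := by
      funext z
      rw [pdE_phiInner c j e z Real.cosh Real.sinh Real.hasDerivAt_cosh]
    rw [h1]
    have hdiff : DifferentiableAt ℝ (fun z : EuclideanSpace ℝ (Fin n) =>
        c * Real.sinh (c * ⟪e, z⟫)) x :=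
      (hasFDerivAt_phiInner c e x (fun s => c * Real.sinh s)
        (fun s => c * Real.cosh s)
        (fun s => (Real.hasDerivAt_sinh s).const_mul c)).differentiableAt
    rw [pdE_mul_const j hdiff (e j)]
    rw [pdE_phiInner c j e x (fun s => c * Real.sinh s) (fun s => c * Real.cosh s)
      (fun s => (Real.hasDerivAt_sinh s).const_mul c)]
    ring
  rw [Finset.sum_congr rfl (fun j _ => key j), ← Finset.mul_sum]
  have : ∑ j : Fin n, e j * e j = 1 := by
    have h := real_inner_self_eq_norm_sq e
    rw [he] at h
    have h2 : ⟪e, e⟫ = ∑ j : Fin n, e j * e j := by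
      simp only [PiLp.inner_apply, RCLike.inner_apply, conj_trivial]
    rw [h2] at h
    simpa using h
  rw [this, mul_one]

/-- A finite `δ`-net of directions on the unit sphere. -/
lemma exists_net (hn : 1 ≤ n) {δ : ℝ} (hδ : 0 < δ) :
    ∃ T : Finset (EuclideanSpace ℝ (Fin n)), T.Nonempty ∧ (∀ e ∈ T, ‖e‖ = 1) ∧
      ∀ x : EuclideanSpace ℝ (Fin n), ∃ e ∈ T, (1 - δ) * ‖x‖ ≤ ⟪e, x⟫ := by
  set S := Metric.sphere (0 : EuclideanSpace ℝ (Fin n)) 1 with hS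
  have hcpt : IsCompact S := isCompact_sphere 0 1
  set r : ℝ := Real.sqrt (2 * δ) with hr
  have hr0 : 0 < r := Real.sqrt_pos.mpr (by linarith)
  have hr2 : r ^ 2 = 2 * δ := Real.sq_sqrt (by linarith)
  have hcover : S ⊆ ⋃ e ∈ S, Metric.ball e r :=
    fun v hv => Set.mem_biUnion hv (Metric.mem_ball_self hr0)
  obtain ⟨b, hbS, hbfin, hbcov⟩ :=
    hcpt.elim_finite_subcover_image (fun e _ => Metric.isOpen_ball) hcover
  have e₀mem : EuclideanSpace.single (⟨0, hn⟩ : Fin n) (1:ℝ) ∈ S := by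
    simp [hS, EuclideanSpace.norm_single]
  refine ⟨hbfin.toFinset, ?_, ?_, ?_⟩
  · obtain ⟨e, he, -⟩ := Set.mem_iUnion₂.mp (hbcov e₀mem)
    exact ⟨e, hbfin.mem_toFinset.mpr he⟩
  · intro e he
    have := hbS (hbfin.mem_toFinset.mp he)
    simpa [hS] using this
  · intro x
    rcases eq_or_ne x 0 with hx | hx
    · obtain ⟨e, he, -⟩ := Set.mem_iUnion₂.mp (hbcov e₀mem)
      exact ⟨e, hbfin.mem_toFinset.mpr he, by simp [hx]⟩
    · set v := ‖x‖⁻¹ • x with hv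
      have hnx : 0 < ‖x‖ := norm_pos_iff.mpr hx
      have hvS : v ∈ S := by
        simp [hS, hv, norm_smul, abs_of_pos (inv_pos.mpr hnx), inv_mul_cancel₀ hnx.ne']
      obtain ⟨e, he, hball⟩ := Set.mem_iUnion₂.mp (hbcov hvS)
      have heS : ‖e‖ = 1 := by simpa [hS] using hbS he
      have hvn : ‖v‖ = 1 := by simpa [hS] using hvS
      have hdist : ‖v - e‖ < r := by
        rw [← dist_eq_norm]; exact hball
      have hinner : 1 - δ ≤ ⟪e, v⟫ := by
        have hsq : ‖v - e‖ ^ 2 = ‖v‖ ^ 2 - 2 * ⟪v, e⟫ + ‖e‖ ^ 2 := norm_sub_sq_real v e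
        have h1 : ‖v - e‖ ^ 2 < r ^ 2 :=
          sq_lt_sq' (by linarith [norm_nonneg (v - e)]) hdist
        rw [hvn, heS, hr2] at *
        have := real_inner_comm e v
        nlinarith [sq_nonneg (‖v - e‖)]
      have hex : ⟪e, x⟫ = ‖x‖ * ⟪e, v⟫ := by
        rw [hv, real_inner_smul_right]
        field_simp
      refine ⟨e, hbfin.mem_toFinset.mpr he, ?_⟩
      rw [hex]
      calc (1 - δ) * ‖x‖ = ‖x‖ * (1 - δ) := mul_comm _ _
        _ ≤ ‖x‖ * ⟪e, v⟫ := mul_le_mul_of_nonneg_left hinner hnx.le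

lemma growth_tendsto (M lam μ ε : ℝ) (hμ : 0 < μ) (hlam : lam < μ) (hε : 0 < ε) :
    Tendsto (fun r : ℝ => M * Real.exp (lam * r) - ε / 2 * Real.exp (μ * r)) atTop atBot := by
  have hEq : ∀ r : ℝ, M * Real.exp (lam * r) - ε / 2 * Real.exp (μ * r)
      = Real.exp (μ * r) * (M * Real.exp ((lam - μ) * r) - ε / 2) := by
    intro r
    have key : Real.exp (μ * r) * Real.exp ((lam - μ) * r) = Real.exp (lam * r) := by
      rw [← Real.exp_add]; ring_nf
    linear_combination (-M) * key
  simp_rw [hEq]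
  have h1 : Tendsto (fun r : ℝ => Real.exp (μ * r)) atTop atTop := by
    apply Real.tendsto_exp_atTop.comp
    exact Tendsto.const_mul_atTop (by linarith) tendsto_id
  have h2 : Tendsto (fun r : ℝ => M * Real.exp ((lam - μ) * r) - ε / 2) atTop
      (𝓝 (M * 0 - ε / 2)) := by
    apply Tendsto.sub_const
    apply Tendsto.const_mul
    have hlin : Tendsto (fun r : ℝ => (lam - μ) * r) atTop atBot :=
      Tendsto.const_mul_atTop_of_neg (by linarith) tendsto_id
    exact Real.tendsto_exp_atBot.comp hlin
  exact h1.atTop_mul_neg (by nlinarith) h2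

lemma contDiff_bar (c : ℝ) (e : EuclideanSpace ℝ (Fin n)) :
    ContDiff ℝ (⊤ : ℕ∞) (fun y : EuclideanSpace ℝ (Fin n) => Real.cosh (c * ⟪e, y⟫)) :=
  Real.contDiff_cosh.comp (contDiff_const.mul (innerSL ℝ e).contDiff)

lemma pdE_sum {ι : Type*} (j : Fin n) (T : Finset ι) (F : ι → EuclideanSpace ℝ (Fin n) → ℝ)
    (x : EuclideanSpace ℝ (Fin n)) (hF : ∀ e ∈ T, DifferentiableAt ℝ (F e) x) :
    pdE j (fun y => ∑ e ∈ T, F e y) x = ∑ e ∈ T, pdE j (F e) x := by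
  unfold pdE
  rw [fderiv_fun_sum hF]
  simp

lemma pdE_sub_const_mul (j : Fin n) {f g : EuclideanSpace ℝ (Fin n) → ℝ}
    (hf : ContDiff ℝ (⊤ : ℕ∞) f) (hg : ContDiff ℝ (⊤ : ℕ∞) g) (ε : ℝ) :
    pdE j (fun y => f y - ε * g y) = fun x => pdE j f x - ε * pdE j g x := by
  funext x
  have hf' : DifferentiableAt ℝ f x := (hf.differentiable (by simp)).differentiableAt
  have hg' : DifferentiableAt ℝ g x := (hg.differentiable (by simp)).differentiableAt
  unfold pdE
  rw [fderiv_fun_sub hf' (hg'.const_mul ε), fderiv_const_mul hg']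
  simp

lemma lapE_sub_const_mul {f g : EuclideanSpace ℝ (Fin n) → ℝ}
    (hf : ContDiff ℝ (⊤ : ℕ∞) f) (hg : ContDiff ℝ (⊤ : ℕ∞) g) (ε : ℝ)
    (x : EuclideanSpace ℝ (Fin n)) :
    lapE (fun y => f y - ε * g y) x = lapE f x - ε * lapE g x := by
  unfold lapE
  have hsummand : ∀ j : Fin n, pdE j (fun z => pdE j (fun y => f y - ε * g y) z) x
      = pdE j (fun z => pdE j f z) x - ε * pdE j (fun z => pdE j g z) x := by
    intro j
    have heq : (fun z => pdE j (fun y => f y - ε * g y) z)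
        = fun z => pdE j f z - ε * pdE j g z := by
      funext z
      rw [pdE_sub_const_mul j hf hg ε]
    rw [heq, pdE_sub_const_mul j (contDiff_pdE j hf) (contDiff_pdE j hg) ε]
  rw [Finset.sum_congr rfl (fun j _ => hsummand j), Finset.sum_sub_distrib, ← Finset.mul_sum]

/-- Laplacian of the summed barrier. -/
lemma lapE_barrier (c : ℝ) (T : Finset (EuclideanSpace ℝ (Fin n)))
    (hT : ∀ e ∈ T, ‖e‖ = 1) (x : EuclideanSpace ℝ (Fin n)) :
    lapE (fun y => ∑ e ∈ T, Real.cosh (c * ⟪e, y⟫)) x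
      = c ^ 2 * ∑ e ∈ T, Real.cosh (c * ⟪e, x⟫) := by
  unfold lapE
  have step1 : ∀ j : Fin n, (fun z => pdE j (fun y => ∑ e ∈ T, Real.cosh (c * ⟪e, y⟫)) z)
      = fun z => ∑ e ∈ T, pdE j (fun y => Real.cosh (c * ⟪e, y⟫)) z := by
    intro j
    funext z
    exact pdE_sum j T _ z (fun e _ => (hasFDerivAt_phiInner c e z Real.cosh Real.sinh
      Real.hasDerivAt_cosh).differentiableAt)
  have step2 : ∀ j : Fin n,
      pdE j (fun z => ∑ e ∈ T, pdE j (fun y => Real.cosh (c * ⟪e, y⟫)) z) x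
      = ∑ e ∈ T, pdE j (fun z => pdE j (fun y => Real.cosh (c * ⟪e, y⟫)) z) x := by
    intro j
    exact pdE_sum j T _ x (fun e _ => ((contDiff_pdE j (contDiff_bar c e)).differentiable
      (by simp)).differentiableAt)
  calc ∑ j : Fin n, pdE j (fun z => pdE j (fun y => ∑ e ∈ T, Real.cosh (c * ⟪e, y⟫)) z) x
      = ∑ j : Fin n, ∑ e ∈ T, pdE j (fun z => pdE j (fun y => Real.cosh (c * ⟪e, y⟫)) z) x := by
        apply Finset.sum_congr rfl
        intro j _
        rw [step1 j, step2 j]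
    _ = ∑ e ∈ T, ∑ j : Fin n, pdE j (fun z => pdE j (fun y => Real.cosh (c * ⟪e, y⟫)) z) x :=
        Finset.sum_comm
    _ = ∑ e ∈ T, c ^ 2 * Real.cosh (c * ⟪e, x⟫) :=
        Finset.sum_congr rfl (fun e he => lapE_bar c e (hT e he) x)
    _ = c ^ 2 * ∑ e ∈ T, Real.cosh (c * ⟪e, x⟫) := (Finset.mul_sum _ _ _).symm

lemma pdE_neg (j : Fin n) (f : EuclideanSpace ℝ (Fin n) → ℝ) :
    pdE j (fun y => -f y) = fun x => -(pdE j f x) := by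
  funext x
  unfold pdE
  rw [fderiv_fun_neg]
  simp

lemma lapE_neg (f : EuclideanSpace ℝ (Fin n) → ℝ) (x : EuclideanSpace ℝ (Fin n)) :
    lapE (fun y => -f y) x = - lapE f x := by
  unfold lapE
  rw [← Finset.sum_neg_distrib]
  apply Finset.sum_congr rfl
  intro j _
  have heq : (fun z => pdE j (fun y => -f y) z) = fun z => -(pdE j f z) := by
    funext z
    rw [pdE_neg j f]
  rw [heq, pdE_neg j (fun z => pdE j f z)]

/-- The key one-sided estimate. -/
lemma key_le (n : ℕ) (hn : 1 ≤ n) (c lam : ℝ)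
    (hc : 0 < c) (hlam0 : 0 ≤ lam) (hlamc : lam < c)
    (u : EuclideanSpace ℝ (Fin n) → ℝ) (hu : ContDiff ℝ (⊤ : ℕ∞) u)
    (hΔ : ∀ x, lapE u x = c ^ 2 * u x)
    (M : ℝ) (hM : ∀ x, |u x| ≤ M * Real.exp (lam * ‖x‖)) :
    ∀ x, u x ≤ 0 := by
  set δ : ℝ := (c - lam) / (2 * c) with hδdef
  have hδ0 : 0 < δ := div_pos (by linarith) (by linarith)
  set μ : ℝ := c * (1 - δ) with hμdef
  have hμeq : μ = (c + lam) / 2 := by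
    rw [hμdef, hδdef]
    field_simp
    ring
  have hμlam : lam < μ := by rw [hμeq]; linarith
  have hμpos : 0 < μ := by rw [hμeq]; linarith
  obtain ⟨T, hTne, hTnorm, hTnet⟩ := exists_net hn hδ0
  set h : EuclideanSpace ℝ (Fin n) → ℝ := fun y => ∑ e ∈ T, Real.cosh (c * ⟪e, y⟫) with hhdef
  have hhsmooth : ContDiff ℝ (⊤ : ℕ∞) h := ContDiff.sum (fun e _ => contDiff_bar c e)
  have hhlap : ∀ x, lapE h x = c ^ 2 * h x := fun x => lapE_barrier c T hTnorm x
  have hhlb : ∀ x, Real.exp (μ * ‖x‖) / 2 ≤ h x := by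
    intro x
    obtain ⟨e, heT, hex⟩ := hTnet x
    have h1 : Real.exp (μ * ‖x‖) / 2 ≤ Real.cosh (c * ⟪e, x⟫) := by
      have h2 : μ * ‖x‖ ≤ c * ⟪e, x⟫ := by
        have := mul_le_mul_of_nonneg_left hex hc.le
        calc μ * ‖x‖ = c * ((1 - δ) * ‖x‖) := by rw [hμdef]; ring
          _ ≤ c * ⟪e, x⟫ := this
      calc Real.exp (μ * ‖x‖) / 2 ≤ Real.exp (c * ⟪e, x⟫) / 2 := by
            have := Real.exp_le_exp.mpr h2
            linarith
        _ ≤ Real.cosh (c * ⟪e, x⟫) := by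
            rw [Real.cosh_eq]
            have := Real.exp_pos (-(c * ⟪e, x⟫))
            linarith
    calc Real.exp (μ * ‖x‖) / 2 ≤ Real.cosh (c * ⟪e, x⟫) := h1
      _ ≤ h x := Finset.single_le_sum (f := fun e' => Real.cosh (c * ⟪e', x⟫)) (fun e' _ => (Real.cosh_pos _).le) heT
  have hhpos : ∀ x, 0 < h x := fun x =>
    lt_of_lt_of_le (by positivity) (hhlb x)
  -- main step: for every ε > 0, u ≤ ε h
  have main : ∀ ε : ℝ, 0 < ε → ∀ x, u x ≤ ε * h x := by
    intro ε hε
    set φ : EuclideanSpace ℝ (Fin n) → ℝ := fun y => u y - ε * h y with hφdef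
    have hφsmooth : ContDiff ℝ (⊤ : ℕ∞) φ := hu.sub (contDiff_const.mul hhsmooth)
    have hφlap : ∀ x, lapE φ x = c ^ 2 * φ x := by
      intro x
      rw [hφdef]
      rw [lapE_sub_const_mul hu hhsmooth ε x, hΔ x, hhlap x]
      ring
    -- φ is eventually below φ 0 - 1
    have hbd : ∀ x, φ x ≤ M * Real.exp (lam * ‖x‖) - ε / 2 * Real.exp (μ * ‖x‖) := by
      intro x
      have h1 : u x ≤ M * Real.exp (lam * ‖x‖) := (abs_le.mp (hM x)).2
      have h2 : ε / 2 * Real.exp (μ * ‖x‖) ≤ ε * h x := by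
        have := mul_le_mul_of_nonneg_left (hhlb x) hε.le
        calc ε / 2 * Real.exp (μ * ‖x‖) = ε * (Real.exp (μ * ‖x‖) / 2) := by ring
          _ ≤ ε * h x := this
      simp only [hφdef]
      linarith
    obtain ⟨R₀, hR₀⟩ := (growth_tendsto M lam μ ε hμpos hμlam hε).eventually
      (eventually_le_atBot (φ 0 - 1)) |>.exists_forall_of_atTop
    set R : ℝ := max R₀ 0 with hRdef
    have hfar : ∀ x : EuclideanSpace ℝ (Fin n), R ≤ ‖x‖ → φ x ≤ φ 0 - 1 := by
      intro x hx
      exact le_trans (hbd x) (hR₀ ‖x‖ (le_trans (le_max_left _ _) hx))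
    -- maximum on the closed ball
    have hK : IsCompact (Metric.closedBall (0 : EuclideanSpace ℝ (Fin n)) R) :=
      isCompact_closedBall 0 R
    have h0K : (0 : EuclideanSpace ℝ (Fin n)) ∈ Metric.closedBall (0:EuclideanSpace ℝ (Fin n)) R := by
      simp [hRdef]
    obtain ⟨x₀, hx₀K, hx₀max⟩ := hK.exists_isMaxOn ⟨0, h0K⟩
      (hφsmooth.continuous.continuousOn)
    have hglobal : ∀ x, φ x ≤ φ x₀ := by
      intro x
      by_cases hx : x ∈ Metric.closedBall (0 : EuclideanSpace ℝ (Fin n)) R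
      · exact hx₀max hx
      · have : R ≤ ‖x‖ := by
          simp only [Metric.mem_closedBall, dist_zero_right, not_le] at hx
          exact hx.le
        calc φ x ≤ φ 0 - 1 := hfar x this
          _ ≤ φ 0 := by linarith
          _ ≤ φ x₀ := hx₀max h0K
    -- at the max, φ(x₀) ≤ 0
    have hφx₀ : φ x₀ ≤ 0 := by
      by_contra hpos
      push_neg at hpos
      have h1 : lapE φ x₀ ≤ 0 := lapE_nonpos_at_max hφsmooth x₀ hglobal
      have h2 : 0 < lapE φ x₀ := by
        rw [hφlap x₀]
        positivity
      linarith
    intro x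
    have := le_trans (hglobal x) hφx₀
    simp only [hφdef] at this
    linarith
  intro x
  by_contra hpos
  push_neg at hpos
  have hx := hhpos x
  have := main (u x / (2 * h x)) (by positivity) x
  have heq : u x / (2 * h x) * h x = u x / 2 := by
    field_simp
  rw [heq] at this
  linarith

end LiouvilleAux

/-- a Liouville-type theorem: a smooth solution of `Δu = c²u` on `ℝⁿ`
growing slower than `e^{c|x|}` is identically zero. -/
theorem liouville_exponential (n : ℕ) (hn : 1 ≤ n) (c lam : ℝ)
    (hc : 0 < c) (hlam0 : 0 ≤ lam) (hlamc : lam < c)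
    (u : EuclideanSpace ℝ (Fin n) → ℝ) (hu : ContDiff ℝ (⊤ : ℕ∞) u)
    (hΔ : ∀ x, lapE u x = c ^ 2 * u x)
    (M : ℝ) (hM : ∀ x, |u x| ≤ M * Real.exp (lam * ‖x‖)) :
    u = fun _ => 0 := by
  funext x
  have h1 : u x ≤ 0 := LiouvilleAux.key_le n hn c lam hc hlam0 hlamc u hu hΔ M hM x
  have h2 : -u x ≤ 0 := by
    apply LiouvilleAux.key_le n hn c lam hc hlam0 hlamc (fun y => -u y) hu.neg ?_ M ?_ x
    · intro y
      rw [LiouvilleAux.lapE_neg u y, hΔ y]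
      ring
    · intro y
      simpa [abs_neg] using hM y
  linarith
end
end
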